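/- arXiv:2601.15648 — 2 statements merged into one kernel-verified Lean document; each statement's English description precedes it below -/
import Mathlib

section
/- Let R be a ring of characteristic p > 0 with an iterative derivation δ, and let R₁ = {a ∈ R : δ^(1)(a) = 0} be the constants of the derivation δ^(1). Then δ^(p) maps R₁ into itself, and the restriction of δ^(p) to R₁ is a derivation on R₁. -/
/-- An iterative derivation on a unital ring `R`: a sequence of additive maps
`d n : R → R` with `d 0 = id`, the Leibniz rule
`d n (a*b) = ∑_{i+j=n} d i a * d j b`, and iterativity
`d n ∘ d m = (m+n choose n) • d (m+n)`. -/
structure IterDeriv (R : Type*) [Ring R] where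
  d : ℕ → R → R
  map_add : ∀ n a b, d n (a + b) = d n a + d n b
  map_id : ∀ a, d 0 a = a
  leibniz : ∀ n a b, d n (a * b) = ∑ ij ∈ Finset.HasAntidiagonal.antidiagonal n, d ij.1 a * d ij.2 b
  iter : ∀ m n a, d n (d m a) = (m + n).choose n • d (m + n) a

/-- In characteristic `p > 0`, `δ⁽ᵖ⁾` maps the constants `R₁` of `δ⁽¹⁾` into
themselves and restricts to a derivation on `R₁`. -/
theorem d_p_is_derivation_on_first_constants (R : Type*) [Ring R] (p : ℕ)
    (hp : p.Prime) [CharP R p] (D : IterDeriv R) :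
    (∀ a : R, D.d 1 a = 0 → D.d 1 (D.d p a) = 0) ∧
    (∀ a b : R, D.d 1 a = 0 → D.d 1 b = 0 →
      D.d p (a * b) = D.d p a * b + a * D.d p b) := by
  have hd0 : ∀ n, D.d n 0 = 0 := by
    intro n
    have h := D.map_add n 0 0
    rw [add_zero] at h
    exact left_eq_add.mp h
  have hkill : ∀ (m : ℕ) (x : R), ¬ p ∣ m → m • x = 0 → x = 0 := by
    intro m x hm hx
    have hcop : Nat.Coprime m p := (hp.coprime_iff_not_dvd.mpr hm).symm
    obtain ⟨u, -, hu⟩ := Nat.exists_mul_mod_eq_one_of_coprime hcop hp.one_lt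
    have h1 : ((u * m : ℕ) : R) = ((1 : ℕ) : R) := by
      rw [CharP.natCast_eq_natCast R p]
      show (u * m) % p = 1 % p
      rw [Nat.mul_comm u m, hu, Nat.mod_eq_of_lt hp.one_lt]
    calc x = (1 : R) * x := (one_mul x).symm
      _ = ((u * m : ℕ) : R) * x := by rw [h1, Nat.cast_one]
      _ = (u : R) * ((m : R) * x) := by rw [Nat.cast_mul, mul_assoc]
      _ = (u : R) * (m • x) := by rw [nsmul_eq_mul]
      _ = 0 := by rw [hx, mul_zero]
  constructor
  · intro a ha
    have h1 := D.iter p 1 a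
    have h2 := D.iter 1 p a
    rw [ha, hd0] at h2
    rw [Nat.add_comm 1 p, Nat.choose_succ_self_right] at h2
    rw [Nat.choose_one_right] at h1
    rw [h1]
    exact h2.symm
  · intro a b ha hb
    have key : ∀ i, 0 < i → i < p → D.d i a = 0 := by
      intro i
      induction i with
      | zero => intro h; exact absurd h (lt_irrefl 0)
      | succ n ih =>
        intro _ hlt
        rcases Nat.eq_zero_or_pos n with h0 | hpos
        · subst h0; exact ha
        · have hn : D.d n a = 0 := ih hpos (by omega)
          have h := D.iter n 1 a
          rw [hn, hd0, Nat.choose_one_right] at h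
          refine hkill (n + 1) _ ?_ h.symm
          intro hdvd
          exact absurd (Nat.le_of_dvd (by omega) hdvd) (by omega)
    rw [D.leibniz, Finset.Nat.sum_antidiagonal_eq_sum_range_succ
      (fun i j => D.d i a * D.d j b), Finset.sum_range_succ]
    have hmid : ∑ i ∈ Finset.range p, D.d i a * D.d (p - i) b = a * D.d p b := by
      have h := Finset.sum_eq_single_of_mem (0 : ℕ) (Finset.mem_range.mpr hp.pos)
        (f := fun i => D.d i a * D.d (p - i) b)
        (fun i hi hne => by
          show D.d i a * D.d (p - i) b = 0
          rw [key i (Nat.pos_of_ne_zero hne) (Finset.mem_range.mp hi), zero_mul])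
      rw [h]
      show D.d 0 a * D.d (p - 0) b = a * D.d p b
      rw [Nat.sub_zero, D.map_id]
    rw [hmid, Nat.sub_self, D.map_id]
    exact add_comm _ _
end

section
/- Let K/F be a finite Galois extension with group G = Gal(K/F), let F carry an iterative derivation δ_F that extends uniquely to an iterative derivation δ_K on K, and suppose every element of G commutes with each δ_K^(n). Let f : G × G → K^× be a 2-cocycle taking values in the constants K^δ, and let B = ⊕_{σ∈G} K u_σ be the corresponding crossed product algebra with u_σ u_τ = f(σ,τ) u_{στ} and u_σ k = σ(k) u_σ. Then the maps δ_B^(n)(Σ_σ k_σ u_σ) = Σ_σ δ_K^(n)(k_σ) u_σ define an iterative derivation on B extending δ_K. -/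
/-- Let `K/F` be a finite Galois extension with group `G`, `δ_K` an iterative
derivation on `K` whose components preserve `F` and commute with every element
of `G`, and `f` a `2`-cocycle on `G` with values in the constants of `δ_K`.
If `B = ⊕_σ K·u_σ` is the corresponding crossed product algebra, then applying
`δ_K` coefficientwise gives an iterative derivation on `B` extending `δ_K`. -/
theorem crossed_product_iterDeriv
    (F K : Type*) [Field F] [Field K] [Algebra F K] [FiniteDimensional F K]
    [IsGalois F K] [Fintype (K ≃ₐ[F] K)]
    (DK : IterDeriv K)
    -- the components of `δ_K` map `F` into `F`
    (hFstable : ∀ (n : ℕ) (x : F), ∃ y : F,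
      DK.d n (algebraMap F K x) = algebraMap F K y)
    -- every element of the Galois group commutes with `δ_K`
    (hcomm : ∀ (σ : K ≃ₐ[F] K) (n : ℕ) (x : K), DK.d n (σ x) = σ (DK.d n x))
    (f : (K ≃ₐ[F] K) → (K ≃ₐ[F] K) → Kˣ)
    -- `f` is a `2`-cocycle
    (hcocycle : ∀ σ τ ρ : K ≃ₐ[F] K,
      σ (f τ ρ : K) * (f σ (τ * ρ) : K) = (f σ τ : K) * (f (σ * τ) ρ : K))
    -- `f` takes values in the constants of `δ_K`
    (hfconst : ∀ σ τ : K ≃ₐ[F] K, ∀ n ≥ 1, DK.d n ((f σ τ : K)) = 0)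
    -- the crossed product algebra `B`
    (B : Type*) [Ring B] (j : K →+* B) (u : (K ≃ₐ[F] K) → B)
    (hone : u 1 = 1)
    (humul : ∀ σ τ : K ≃ₐ[F] K, u σ * u τ = j (f σ τ : K) * u (σ * τ))
    (huk : ∀ (σ : K ≃ₐ[F] K) (k : K), u σ * j k = j (σ k) * u σ)
    -- `B = ⊕_σ K u_σ`: every element has a unique coefficient expansion
    (hbasis : ∀ b : B, ∃! c : (K ≃ₐ[F] K) → K, b = ∑ σ, j (c σ) * u σ) :
    ∃ E : IterDeriv B,
      (∀ (n : ℕ) (c : (K ≃ₐ[F] K) → K),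
        E.d n (∑ σ, j (c σ) * u σ) = ∑ σ, j (DK.d n (c σ)) * u σ) ∧
      (∀ (n : ℕ) (k : K), E.d n (j k) = j (DK.d n k)) := by
  classical
  let coef : B → (K ≃ₐ[F] K) → K := fun b => (hbasis b).choose
  have coef_spec : ∀ b : B, b = ∑ σ, j (coef b σ) * u σ := fun b => (hbasis b).choose_spec.1
  have coef_eq : ∀ c : (K ≃ₐ[F] K) → K, coef (∑ σ, j (c σ) * u σ) = c := fun c =>
    ((hbasis _).choose_spec.2 c rfl).symm
  have DK0 : ∀ n, DK.d n 0 = 0 := by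
    intro n
    have := DK.map_add n 0 0
    simpa using this.symm
  have dsum : ∀ (n : ℕ) {α : Type _} (s : Finset α) (g : α → K),
      DK.d n (∑ x ∈ s, g x) = ∑ x ∈ s, DK.d n (g x) := fun n α s g =>
    map_sum (AddMonoidHom.mk' (DK.d n) (fun a b => DK.map_add n a b)) g s
  have dconst : ∀ (n : ℕ) (x : K) (σ τ : K ≃ₐ[F] K),
      DK.d n (x * (f σ τ : K)) = DK.d n x * (f σ τ : K) := by
    intro n x σ τ
    rw [DK.leibniz]
    rw [Finset.sum_eq_single (n, 0)]
    · simp [DK.map_id]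
    · rintro ⟨a, b⟩ hab hne
      simp only [Finset.HasAntidiagonal.mem_antidiagonal] at hab
      have hb : b ≠ 0 := by
        rintro rfl
        simp only [Nat.add_zero] at hab
        exact hne (by rw [hab])
      rw [hfconst σ τ b (Nat.one_le_iff_ne_zero.mpr hb), mul_zero]
    · intro h
      exact absurd (by simp : ((n, 0) : ℕ × ℕ) ∈ Finset.HasAntidiagonal.antidiagonal n) h
  -- product expansion
  have prod_expand : ∀ c e : (K ≃ₐ[F] K) → K,
      (∑ σ, j (c σ) * u σ) * (∑ τ, j (e τ) * u τ) =
        ∑ ρ, j (∑ σ, c σ * σ (e (σ⁻¹ * ρ)) * (f σ (σ⁻¹ * ρ) : K)) * u ρ := by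
    intro c e
    rw [Finset.sum_mul_sum]
    have step1 : ∀ σ τ : K ≃ₐ[F] K, (j (c σ) * u σ) * (j (e τ) * u τ) =
        j (c σ * σ (e τ) * (f σ τ : K)) * u (σ * τ) := by
      intro σ τ
      calc (j (c σ) * u σ) * (j (e τ) * u τ)
          = j (c σ) * (u σ * j (e τ)) * u τ := by simp only [mul_assoc]
        _ = j (c σ) * (j (σ (e τ)) * u σ) * u τ := by rw [huk]
        _ = (j (c σ) * j (σ (e τ))) * (u σ * u τ) := by simp only [mul_assoc]
        _ = (j (c σ) * j (σ (e τ))) * (j (f σ τ : K) * u (σ * τ)) := by rw [humul]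
        _ = j (c σ * σ (e τ) * (f σ τ : K)) * u (σ * τ) := by
            rw [map_mul, map_mul]; simp only [mul_assoc]
    simp only [step1]
    have step2 : ∀ σ : K ≃ₐ[F] K,
        (∑ τ : K ≃ₐ[F] K, j (c σ * σ (e τ) * (f σ τ : K)) * u (σ * τ)) =
        ∑ ρ : K ≃ₐ[F] K, j (c σ * σ (e (σ⁻¹ * ρ)) * (f σ (σ⁻¹ * ρ) : K)) * u ρ := by
      intro σ
      refine Fintype.sum_equiv (Equiv.mulLeft σ) _ _ ?_
      intro τ
      simp [Equiv.mulLeft]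
    simp only [step2]
    rw [Finset.sum_comm]
    refine Finset.sum_congr rfl ?_
    intro ρ _
    rw [← Finset.sum_mul, ← map_sum]
  refine ⟨⟨fun n b => ∑ σ, j (DK.d n (coef b σ)) * u σ, ?_, ?_, ?_, ?_⟩, ?_, ?_⟩
  · -- map_add
    intro n a b
    show (∑ σ, j (DK.d n (coef (a + b) σ)) * u σ) =
      (∑ σ, j (DK.d n (coef a σ)) * u σ) + (∑ σ, j (DK.d n (coef b σ)) * u σ)
    have hab : a + b = ∑ σ, j (coef a σ + coef b σ) * u σ := by
      conv_lhs => rw [coef_spec a, coef_spec b]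
      rw [← Finset.sum_add_distrib]
      simp [map_add, add_mul]
    rw [hab, coef_eq]
    simp only [DK.map_add, map_add, add_mul]
    rw [Finset.sum_add_distrib]
  · -- map_id
    intro a
    show (∑ σ, j (DK.d 0 (coef a σ)) * u σ) = a
    simp only [DK.map_id]
    exact (coef_spec a).symm
  · -- leibniz
    intro n a b
    show (∑ σ, j (DK.d n (coef (a * b) σ)) * u σ) =
      ∑ ij ∈ Finset.HasAntidiagonal.antidiagonal n,
        (∑ σ, j (DK.d ij.1 (coef a σ)) * u σ) * (∑ σ, j (DK.d ij.2 (coef b σ)) * u σ)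
    have hab : a * b = ∑ ρ, j (∑ σ, coef a σ * σ (coef b (σ⁻¹ * ρ)) *
        (f σ (σ⁻¹ * ρ) : K)) * u ρ := by
      conv_lhs => rw [coef_spec a, coef_spec b]
      exact prod_expand _ _
    rw [hab, coef_eq]
    simp only [prod_expand]
    rw [Finset.sum_comm]
    refine Finset.sum_congr rfl ?_
    intro ρ _
    rw [← Finset.sum_mul, ← map_sum]
    congr 2
    rw [dsum]
    rw [Finset.sum_comm]
    refine Finset.sum_congr rfl ?_
    intro σ _
    rw [dconst, DK.leibniz, Finset.sum_mul]
    refine Finset.sum_congr rfl ?_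
    intro ij _
    rw [hcomm]
  · -- iter
    intro m n b
    show (∑ σ, j (DK.d n (coef (∑ σ, j (DK.d m (coef b σ)) * u σ) σ)) * u σ) =
      (m + n).choose n • ∑ σ, j (DK.d (m + n) (coef b σ)) * u σ
    rw [coef_eq]
    simp only [DK.iter]
    rw [Finset.smul_sum]
    refine Finset.sum_congr rfl ?_
    intro σ _
    rw [map_nsmul, smul_mul_assoc]
  · -- extends coefficientwise
    intro n c
    show (∑ σ, j (DK.d n (coef (∑ σ, j (c σ) * u σ) σ)) * u σ) = ∑ σ, j (DK.d n (c σ)) * u σ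
    rw [coef_eq]
  · -- extends δ_K
    intro n k
    have hjk : j k = ∑ σ : K ≃ₐ[F] K, j (if σ = 1 then k else 0) * u σ := by
      rw [Finset.sum_eq_single (1 : K ≃ₐ[F] K)]
      · simp [hone]
      · intro σ _ hσ
        simp [hσ]
      · simp
    show (∑ σ, j (DK.d n (coef (j k) σ)) * u σ) = j (DK.d n k)
    rw [hjk, coef_eq]
    rw [Finset.sum_eq_single (1 : K ≃ₐ[F] K)]
    · simp [hone]
    · intro σ _ hσ
      simp [hσ, DK0]
    · simp
end
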